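/- arXiv:2504.14182 — 2 statements merged into one kernel-verified Lean document; each statement's English description precedes it below -/
import Mathlib

section
/- If k is an even positive integer and n ≥ 2, then ∫_{-1}^{1} P_{k,n}(t)³ (1-t²)^{(n-2)/2} dt > 0. -/
open Set

open Polynomial intervalIntegral Real


namespace CubeAux

lemma cont_upow {c : ℝ} (hc : 0 ≤ c) : Continuous fun t : ℝ => (1 - t ^ 2) ^ c :=
  (Real.continuous_rpow_const hc).comp (by continuity)

lemma upow_succ {t : ℝ} (ht : 0 ≤ 1 - t ^ 2) {e : ℝ} (he : 0 ≤ e) :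
    (1 - t ^ 2) ^ (e + 1) = (1 - t ^ 2) ^ e * (1 - t ^ 2) := by
  rcases eq_or_lt_of_le ht with h | h
  · rw [← h, Real.zero_rpow (by positivity), mul_zero]
  · rw [Real.rpow_add_one h.ne']

lemma hasDerivAt_upow_mul {e : ℝ} (he : 1 ≤ e) {W : ℝ → ℝ} {w' : ℝ} {t : ℝ}
    (hW : HasDerivAt W w' t) :
    HasDerivAt (fun s => (1 - s ^ 2) ^ e * W s)
      (e * (1 - t ^ 2) ^ (e - 1) * (-(2 * t)) * W t + (1 - t ^ 2) ^ e * w') t := by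
  have h1 : HasDerivAt (fun s : ℝ => 1 - s ^ 2) (-(2 * t)) t := by
    simpa using (hasDerivAt_pow 2 t).const_sub 1
  have h2 : HasDerivAt (fun s : ℝ => (1 - s ^ 2) ^ e)
      (e * (1 - t ^ 2) ^ (e - 1) * (-(2 * t))) t := by
    have h3 := (Real.hasDerivAt_rpow_const (x := 1 - t ^ 2) (p := e) (Or.inr he)).comp t h1
    simpa [Function.comp_def, mul_assoc] using h3
  exact h2.mul hW

lemma integral_deriv_zero {e : ℝ} (he : 1 ≤ e) {W W' : ℝ → ℝ}
    (hW : ∀ t, HasDerivAt W (W' t) t) (hWc : Continuous W) (hW'c : Continuous W') :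
    ∫ t in (-1:ℝ)..1,
      (e * (1 - t ^ 2) ^ (e - 1) * (-(2 * t)) * W t + (1 - t ^ 2) ^ e * W' t) = 0 := by
  have hcont : Continuous fun t : ℝ =>
      e * (1 - t ^ 2) ^ (e - 1) * (-(2 * t)) * W t + (1 - t ^ 2) ^ e * W' t := by
    have h1 : Continuous fun t : ℝ => (1 - t ^ 2) ^ (e - 1) := cont_upow (by linarith)
    have h2 : Continuous fun t : ℝ => (1 - t ^ 2) ^ e := cont_upow (by linarith)
    exact (((continuous_const.mul h1).mul
      ((continuous_const.mul continuous_id').neg)).mul hWc).add (h2.mul hW'c)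
  have hftc := intervalIntegral.integral_eq_sub_of_hasDerivAt (a := (-1:ℝ)) (b := (1:ℝ))
    (f := fun s => (1 - s ^ 2) ^ e * W s)
    (f' := fun t => e * (1 - t ^ 2) ^ (e - 1) * (-(2 * t)) * W t + (1 - t ^ 2) ^ e * W' t)
    (fun t _ => hasDerivAt_upow_mul he (hW t)) (hcont.intervalIntegrable (-1) 1)
  rw [hftc]
  rw [show ((1:ℝ) - 1 ^ 2) = 0 by norm_num, show ((1:ℝ) - (-1) ^ 2) = 0 by norm_num,
    Real.zero_rpow (by linarith : e ≠ 0)]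
  ring

end CubeAux

open CubeAux in
lemma step_even (mr lam β : ℝ) (hβ : 0 ≤ β) (hm : mr = 2 * β + 2) (R : Polynomial ℝ)
    (hode : ∀ t : ℝ, (1 - t ^ 2) * (R.derivative.derivative.eval t)
      - mr * t * (R.derivative.eval t) + lam * R.eval t = 0) :
    3 * lam ^ 2 * (∫ t in (-1:ℝ)..1, (R.eval t) ^ 3 * (1 - t ^ 2) ^ β)
      = 4 * (mr - 1) *
        (∫ t in (-1:ℝ)..1, t * (R.derivative.eval t) ^ 3 * (1 - t ^ 2) ^ (β + 1)) := by
  set A : ℝ → ℝ := fun t => R.eval t with hA_def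
  set B : ℝ → ℝ := fun t => R.derivative.eval t with hB_def
  set Cc : ℝ → ℝ := fun t => R.derivative.derivative.eval t with hC_def
  set W : ℝ → ℝ := fun s => -(3 * lam) * (B s * (A s * A s))
      - 2 * ((1 - s ^ 2) * (B s * (B s * B s))) with hW_def
  set W' : ℝ → ℝ := fun t => -(3 * lam) * (Cc t * (A t * A t) + 2 * (A t * (B t * B t)))
      - 2 * ((-(2 * t)) * (B t * (B t * B t)) + 3 * ((1 - t ^ 2) * (Cc t * (B t * B t)))) with hW'_def
  have hu : ∀ t : ℝ, HasDerivAt (fun s : ℝ => 1 - s ^ 2) (-(2 * t)) t := by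
    intro t; simpa using (hasDerivAt_pow 2 t).const_sub 1
  have hW : ∀ t, HasDerivAt W (W' t) t := by
    intro t
    have hA := R.hasDerivAt t
    have hB := R.derivative.hasDerivAt t
    have h1 := (hB.mul (hA.mul hA)).const_mul (-(3 * lam))
    have h2 := ((hu t).mul (hB.mul (hB.mul hB))).const_mul (2:ℝ)
    have h := h1.sub h2
    refine h.congr_deriv ?_
    simp only [W', A, B, Cc, Pi.mul_apply]
    ring
  have cA : Continuous A := R.continuous
  have cB : Continuous B := R.derivative.continuous
  have cC : Continuous Cc := R.derivative.derivative.continuous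
  have cu : Continuous fun s : ℝ => 1 - s ^ 2 := by continuity
  have cW : Continuous W := by
    exact (continuous_const.mul (cB.mul (cA.mul cA))).sub
      (continuous_const.mul (cu.mul (cB.mul (cB.mul cB))))
  have cW' : Continuous W' := by
    exact (continuous_const.mul ((cC.mul (cA.mul cA)).add
        (continuous_const.mul (cA.mul (cB.mul cB))))).sub
      (continuous_const.mul
        ((((continuous_const.mul continuous_id').neg).mul (cB.mul (cB.mul cB))).add
          (continuous_const.mul (cu.mul (cC.mul (cB.mul cB))))))
  have hzero := integral_deriv_zero (e := β + 1) (by linarith) hW cW cW'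
  simp only [show β + 1 - 1 = β from by ring] at hzero
  have hEq : EqOn
      (fun t => (β + 1) * (1 - t ^ 2) ^ β * (-(2 * t)) * W t + (1 - t ^ 2) ^ (β + 1) * W' t)
      (fun t => 3 * lam ^ 2 * ((A t) ^ 3 * (1 - t ^ 2) ^ β)
        - 4 * (mr - 1) * (t * (B t) ^ 3 * (1 - t ^ 2) ^ (β + 1))) (uIcc (-1:ℝ) 1) := by
    intro t ht
    rw [Set.uIcc_of_le (by norm_num : (-1:ℝ) ≤ 1)] at ht
    have hx : 0 ≤ 1 - t ^ 2 := by nlinarith [ht.1, ht.2]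
    simp only [hW_def, hW'_def]
    rw [upow_succ hx hβ]
    have h := hode t
    linear_combination ((1 - t ^ 2) ^ β *
      (-(3 * lam) * (A t * A t) - 6 * ((1 - t ^ 2) * (B t * B t)))) * h
      - (t * (1 - t ^ 2) ^ β * (3 * lam * (B t) * (A t) ^ 2 + 2 * (B t) ^ 3 * (1 - t ^ 2))) * hm
  rw [intervalIntegral.integral_congr hEq] at hzero
  have hi1 : IntervalIntegrable (fun t => (A t) ^ 3 * (1 - t ^ 2) ^ β) MeasureTheory.volume (-1) 1 :=
    (((cA.pow 3).mul (cont_upow hβ)).intervalIntegrable (-1) 1)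
  have hi2 : IntervalIntegrable (fun t => t * (B t) ^ 3 * (1 - t ^ 2) ^ (β + 1))
      MeasureTheory.volume (-1) 1 :=
    (((continuous_id'.mul (cB.pow 3)).mul (cont_upow (by linarith))).intervalIntegrable (-1) 1)
  rw [intervalIntegral.integral_sub (hi1.const_mul _) (hi2.const_mul _),
    intervalIntegral.integral_const_mul, intervalIntegral.integral_const_mul] at hzero
  linarith [hzero]

open CubeAux in
lemma step_odd (mr lam β : ℝ) (hβ : 0 ≤ β) (hm : mr = 2 * β + 2) (R : Polynomial ℝ)
    (hode : ∀ t : ℝ, (1 - t ^ 2) * (R.derivative.derivative.eval t)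
      - mr * t * (R.derivative.eval t) + lam * R.eval t = 0) :
    (9 * lam ^ 2 + 8 * lam * β ^ 2 + 28 * lam * β + 2 * lam + 16 * β ^ 3 + 20 * β ^ 2 + 4 * β) *
      (∫ t in (-1:ℝ)..1, t * (R.eval t) ^ 3 * (1 - t ^ 2) ^ β)
      = 12 * (2 * β + 1) *
        (∫ t in (-1:ℝ)..1, (R.derivative.eval t) ^ 3 * (1 - t ^ 2) ^ (β + 1)) := by
  set c3 : ℝ := lam * (16 * β + 1) + 8 * β ^ 2 + 2 * β with hc3
  set c4 : ℝ := 9 * lam - 24 * β ^ 2 - 6 * β with hc4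
  set c5 : ℝ := 6 * (4 * β + 1) with hc5
  set A : ℝ → ℝ := fun t => R.eval t with hA_def
  set B : ℝ → ℝ := fun t => R.derivative.eval t with hB_def
  set Cc : ℝ → ℝ := fun t => R.derivative.derivative.eval t with hC_def
  set W : ℝ → ℝ := fun s => c3 * (A s * (A s * A s)) + c4 * (s * (B s * (A s * A s)))
      + c5 * ((1 - s ^ 2) * (A s * (B s * B s)))
      + 6 * (s * ((1 - s ^ 2) * (B s * (B s * B s)))) with hW_def
  set W' : ℝ → ℝ := fun t => c3 * (3 * ((A t * A t) * B t))
      + c4 * (B t * (A t * A t) + t * (Cc t * (A t * A t) + 2 * (A t * (B t * B t))))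
      + c5 * ((-(2 * t)) * (A t * (B t * B t))
          + (1 - t ^ 2) * (B t * (B t * B t) + 2 * (A t * (B t * Cc t))))
      + 6 * ((1 - t ^ 2) * (B t * (B t * B t))
          + t * ((-(2 * t)) * (B t * (B t * B t)) + (1 - t ^ 2) * (3 * ((B t * B t) * Cc t)))) with hW'_def
  have hu : ∀ t : ℝ, HasDerivAt (fun s : ℝ => 1 - s ^ 2) (-(2 * t)) t := by
    intro t; simpa using (hasDerivAt_pow 2 t).const_sub 1
  have hW : ∀ t, HasDerivAt W (W' t) t := by
    intro t
    have hA := R.hasDerivAt t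
    have hB := R.derivative.hasDerivAt t
    have h3 := (hA.mul (hA.mul hA)).const_mul c3
    have h4 := ((hasDerivAt_id t).mul (hB.mul (hA.mul hA))).const_mul c4
    have h5 := ((hu t).mul (hA.mul (hB.mul hB))).const_mul c5
    have h6 := ((hasDerivAt_id t).mul ((hu t).mul (hB.mul (hB.mul hB)))).const_mul (6:ℝ)
    have h := ((h3.add h4).add h5).add h6
    refine h.congr_deriv ?_
    simp only [W', A, B, Cc, Pi.mul_apply, id_eq]
    ring
  have cA : Continuous A := R.continuous
  have cB : Continuous B := R.derivative.continuous
  have cC : Continuous Cc := R.derivative.derivative.continuous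
  have cu : Continuous fun s : ℝ => 1 - s ^ 2 := by continuity
  have cW : Continuous W := by
    exact (((continuous_const.mul (cA.mul (cA.mul cA))).add
      (continuous_const.mul (continuous_id'.mul (cB.mul (cA.mul cA))))).add
      (continuous_const.mul (cu.mul (cA.mul (cB.mul cB))))).add
      (continuous_const.mul (continuous_id'.mul (cu.mul (cB.mul (cB.mul cB)))))
  have cW' : Continuous W' := by
    refine ((Continuous.add ?_ ?_).add ?_).add ?_
    · exact continuous_const.mul (continuous_const.mul ((cA.mul cA).mul cB))
    · exact continuous_const.mul ((cB.mul (cA.mul cA)).add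
        (continuous_id'.mul ((cC.mul (cA.mul cA)).add
          (continuous_const.mul (cA.mul (cB.mul cB))))))
    · exact continuous_const.mul ((((continuous_const.mul continuous_id').neg).mul
        (cA.mul (cB.mul cB))).add
        (cu.mul ((cB.mul (cB.mul cB)).add (continuous_const.mul (cA.mul (cB.mul cC))))))
    · exact continuous_const.mul ((cu.mul (cB.mul (cB.mul cB))).add
        (continuous_id'.mul ((((continuous_const.mul continuous_id').neg).mul
          (cB.mul (cB.mul cB))).add
          (cu.mul (continuous_const.mul ((cB.mul cB).mul cC))))))
  have hzero := integral_deriv_zero (e := β + 1) (by linarith) hW cW cW'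
  simp only [show β + 1 - 1 = β from by ring] at hzero
  have hEq : EqOn
      (fun t => (β + 1) * (1 - t ^ 2) ^ β * (-(2 * t)) * W t + (1 - t ^ 2) ^ (β + 1) * W' t)
      (fun t => 12 * (2 * β + 1) * ((B t) ^ 3 * (1 - t ^ 2) ^ (β + 1))
        - (9 * lam ^ 2 + 8 * lam * β ^ 2 + 28 * lam * β + 2 * lam
            + 16 * β ^ 3 + 20 * β ^ 2 + 4 * β) * (t * (A t) ^ 3 * (1 - t ^ 2) ^ β))
      (uIcc (-1:ℝ) 1) := by
    intro t ht
    rw [Set.uIcc_of_le (by norm_num : (-1:ℝ) ≤ 1)] at ht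
    have hx : 0 ≤ 1 - t ^ 2 := by nlinarith [ht.1, ht.2]
    simp only [hW_def, hW'_def, hc3, hc4, hc5]
    rw [upow_succ hx hβ]
    have h := hode t
    linear_combination ((1 - t ^ 2) ^ β *
      ((9 * lam - 24 * β ^ 2 - 6 * β) * (t * (A t * A t))
        + 2 * (6 * (4 * β + 1)) * ((1 - t ^ 2) * (A t * B t))
        + 18 * (t * ((1 - t ^ 2) * (B t * B t))))) * h
      + ((1 - t ^ 2) ^ β *
      ((9 * lam - 24 * β ^ 2 - 6 * β) * (t * (A t * A t))
        + 2 * (6 * (4 * β + 1)) * ((1 - t ^ 2) * (A t * B t))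
        + 18 * (t * ((1 - t ^ 2) * (B t * B t)))) * (t * B t)) * hm
  rw [intervalIntegral.integral_congr hEq] at hzero
  have hi1 : IntervalIntegrable (fun t => (B t) ^ 3 * (1 - t ^ 2) ^ (β + 1))
      MeasureTheory.volume (-1) 1 :=
    (((cB.pow 3).mul (cont_upow (by linarith))).intervalIntegrable (-1) 1)
  have hi2 : IntervalIntegrable (fun t => t * (A t) ^ 3 * (1 - t ^ 2) ^ β)
      MeasureTheory.volume (-1) 1 :=
    (((continuous_id'.mul (cA.pow 3)).mul (cont_upow hβ)).intervalIntegrable (-1) 1)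
  rw [intervalIntegral.integral_sub (hi1.const_mul _) (hi2.const_mul _),
    intervalIntegral.integral_const_mul, intervalIntegral.integral_const_mul] at hzero
  linarith [hzero]

open CubeAux in
lemma ode_deriv (mr lam : ℝ) (R : Polynomial ℝ)
    (hode : ∀ t : ℝ, (1 - t ^ 2) * (R.derivative.derivative.eval t)
      - mr * t * (R.derivative.eval t) + lam * R.eval t = 0) :
    ∀ t : ℝ, (1 - t ^ 2) * (R.derivative.derivative.derivative.eval t)
      - (mr + 2) * t * (R.derivative.derivative.eval t)
      + (lam - mr) * (R.derivative.eval t) = 0 := by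
  intro t
  have hu : HasDerivAt (fun s : ℝ => 1 - s ^ 2) (-(2 * t)) t := by
    simpa using (hasDerivAt_pow 2 t).const_sub 1
  have hA := R.hasDerivAt t
  have hB := R.derivative.hasDerivAt t
  have hC := R.derivative.derivative.hasDerivAt t
  have H := ((hu.mul hC).sub (((hasDerivAt_id t).const_mul mr).mul hB)).add (hA.const_mul lam)
  have hz : HasDerivAt (fun s : ℝ => (1 - s ^ 2) * (R.derivative.derivative.eval s)
      - mr * s * (R.derivative.eval s) + lam * R.eval s) 0 t := by
    have hfun : (fun s : ℝ => (1 - s ^ 2) * (R.derivative.derivative.eval s)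
        - mr * s * (R.derivative.eval s) + lam * R.eval s) = fun _ => (0:ℝ) := funext hode
    rw [hfun]
    exact hasDerivAt_const t 0
  have huniq := H.unique hz
  simp only [id_eq] at huniq
  linear_combination huniq

open CubeAux in
lemma deriv_zero_of_lam_zero (mr β : ℝ) (hβ : 0 ≤ β) (hm : mr = 2 * β + 2) (R : Polynomial ℝ)
    (hode : ∀ t : ℝ, (1 - t ^ 2) * (R.derivative.derivative.eval t)
      - mr * t * (R.derivative.eval t) = 0) :
    R.derivative = 0 := by
  have key : ∀ x ∈ Ioo (-1:ℝ) 1, R.derivative.eval x = 0 := by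
    intro x hx
    have hβ1 : (1:ℝ) ≤ β + 1 := by linarith
    have hder : ∀ t ∈ uIcc x (1:ℝ),
        HasDerivAt (fun s => (1 - s ^ 2) ^ (β + 1) * R.derivative.eval s) 0 t := by
      intro t ht
      rw [Set.uIcc_of_le hx.2.le] at ht
      have hx2 : 0 ≤ 1 - t ^ 2 := by nlinarith [hx.1, ht.1, ht.2]
      have h := hasDerivAt_upow_mul hβ1 (R.derivative.hasDerivAt t)
      have hval : (β + 1) * (1 - t ^ 2) ^ (β + 1 - 1) * (-(2 * t)) * R.derivative.eval t
          + (1 - t ^ 2) ^ (β + 1) * R.derivative.derivative.eval t = 0 := by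
        simp only [show β + 1 - 1 = β from by ring]
        rw [upow_succ hx2 hβ]
        linear_combination ((1 - t ^ 2) ^ β) * hode t
          + ((1 - t ^ 2) ^ β * (t * R.derivative.eval t)) * hm
      exact hval ▸ h
    have hftc := intervalIntegral.integral_eq_sub_of_hasDerivAt
      (f' := fun _ => (0:ℝ)) hder (intervalIntegrable_const)
    simp only [intervalIntegral.integral_zero] at hftc
    have h1 : ((1:ℝ) - 1 ^ 2) ^ (β + 1) * R.derivative.eval 1 = 0 := by
      rw [show ((1:ℝ) - 1 ^ 2) = 0 by norm_num, Real.zero_rpow (by linarith : β + 1 ≠ 0)]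
      ring
    rw [h1] at hftc
    have h2 : (1 - x ^ 2) ^ (β + 1) * R.derivative.eval x = 0 := by linarith
    have h3 : (0:ℝ) < (1 - x ^ 2) ^ (β + 1) :=
      Real.rpow_pos_of_pos (by nlinarith [hx.1, hx.2]) _
    exact by
      rcases mul_eq_zero.mp h2 with h | h
      · exact absurd h h3.ne'
      · exact h
  apply Polynomial.eq_zero_of_infinite_isRoot
  exact (Set.Ioo_infinite (by norm_num : (-1:ℝ) < 1)).mono (fun x hx => key x hx)

open CubeAux in
lemma main_pos (j : ℕ) : ∀ (m : ℕ) (R : Polynomial ℝ), 2 ≤ m →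
    (∀ t : ℝ, (1 - t ^ 2) * (R.derivative.derivative.eval t)
      - (m : ℝ) * t * (R.derivative.eval t)
      + (j : ℝ) * ((j : ℝ) + (m : ℝ) - 1) * R.eval t = 0) →
    0 < R.eval 1 →
    ((Even j → 0 < ∫ t in (-1:ℝ)..1, (R.eval t) ^ 3 * (1 - t ^ 2) ^ (((m:ℝ) - 2) / 2)) ∧
     (¬ Even j → 0 < ∫ t in (-1:ℝ)..1, t * (R.eval t) ^ 3 * (1 - t ^ 2) ^ (((m:ℝ) - 2) / 2))) := by
  induction j with
  | zero =>
    intro m R hm hode hpos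
    have hm2 : (2:ℝ) ≤ (m:ℝ) := by exact_mod_cast hm
    constructor
    · intro _
      have hode0 : ∀ t : ℝ, (1 - t ^ 2) * (R.derivative.derivative.eval t)
          - (m:ℝ) * t * (R.derivative.eval t) = 0 := by
        intro t; have := hode t; push_cast at this; linarith
      have hd0 := deriv_zero_of_lam_zero (m:ℝ) (((m:ℝ) - 2) / 2) (by linarith)
        (by ring) R hode0
      have hdeg : R.natDegree = 0 := Polynomial.natDegree_eq_zero_of_derivative_eq_zero hd0
      have hconst : ∀ t : ℝ, R.eval t = R.eval 1 := by
        intro t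
        conv_lhs => rw [Polynomial.eq_C_of_natDegree_eq_zero hdeg]
        conv_rhs => rw [Polynomial.eq_C_of_natDegree_eq_zero hdeg]
        simp
      have hcont : Continuous fun t : ℝ => (R.eval t) ^ 3 * (1 - t ^ 2) ^ (((m:ℝ) - 2) / 2) :=
        (R.continuous.pow 3).mul (cont_upow (by linarith))
      apply intervalIntegral_pos_of_pos_on (hcont.intervalIntegrable _ _) ?_ (by norm_num)
      intro t ht
      rw [hconst t]
      exact mul_pos (pow_pos hpos 3)
        (Real.rpow_pos_of_pos (by nlinarith [ht.1, ht.2]) _)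
    · intro h; exact absurd Even.zero h
  | succ i ih =>
    intro m R hm hode hpos
    have hm2 : (2:ℝ) ≤ (m:ℝ) := by exact_mod_cast hm
    set β : ℝ := ((m:ℝ) - 2) / 2 with hβdef
    have hβ : 0 ≤ β := by rw [hβdef]; linarith
    set lam : ℝ := ((i + 1 : ℕ) : ℝ) * (((i + 1 : ℕ) : ℝ) + (m:ℝ) - 1) with hlamdef
    have hodel : ∀ t : ℝ, (1 - t ^ 2) * (R.derivative.derivative.eval t)
        - (m:ℝ) * t * (R.derivative.eval t) + lam * R.eval t = 0 := hode
    have hlampos : 0 < lam := by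
      rw [hlamdef]
      have h1 : (0:ℝ) < ((i + 1 : ℕ) : ℝ) := by positivity
      have h0 : (0:ℝ) ≤ (i : ℝ) := Nat.cast_nonneg i
      have h2 : (0:ℝ) < ((i + 1 : ℕ) : ℝ) + (m:ℝ) - 1 := by push_cast; linarith
      exact mul_pos h1 h2
    have hm0 : (0:ℝ) < (m:ℝ) := by linarith
    have heq1 : (m:ℝ) * (R.derivative.eval 1) = lam * R.eval 1 := by
      have := hodel 1
      linear_combination -this
    have hB1pos : 0 < R.derivative.eval 1 := by
      nlinarith [mul_pos hlampos hpos]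
    have hodeD := ode_deriv (m:ℝ) lam R hodel
    have hodeD' : ∀ t : ℝ, (1 - t ^ 2) * (R.derivative.derivative.derivative.eval t)
        - ((m + 2 : ℕ) : ℝ) * t * (R.derivative.derivative.eval t)
        + (i : ℝ) * ((i : ℝ) + ((m + 2 : ℕ) : ℝ) - 1) * (R.derivative.eval t) = 0 := by
      intro t
      have := hodeD t
      rw [hlamdef] at this
      push_cast at this ⊢
      linear_combination this
    have ihA := ih (m + 2) R.derivative (by omega) hodeD' hB1pos
    have hexp : (((m + 2 : ℕ) : ℝ) - 2) / 2 = β + 1 := by rw [hβdef]; push_cast; ring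
    rw [hexp] at ihA
    constructor
    · intro hev
      have hstep := step_even (m:ℝ) lam β hβ (by rw [hβdef]; ring) R hodel
      have hodd : ¬ Even i := Nat.even_add_one.mp hev
      have hI := ihA.2 hodd
      have h4 : 0 < 4 * ((m:ℝ) - 1) := by linarith
      have hprod : 0 < 3 * lam ^ 2 *
          (∫ t in (-1:ℝ)..1, (R.eval t) ^ 3 * (1 - t ^ 2) ^ β) := by
        rw [hstep]; exact mul_pos h4 hI
      have hc : 0 < 3 * lam ^ 2 := by nlinarith [hlampos]
      rcases mul_pos_iff.mp hprod with ⟨_, hX⟩ | ⟨hneg, _⟩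
      · exact hX
      · linarith
    · intro hodd
      have hstep := step_odd (m:ℝ) lam β hβ (by rw [hβdef]; ring) R hodel
      have hievn : Even i := by
        by_contra hc
        exact hodd (Nat.even_add_one.mpr hc)
      have hI := ihA.1 hievn
      have h12 : 0 < 12 * (2 * β + 1) := by linarith
      have hprod : 0 < (9 * lam ^ 2 + 8 * lam * β ^ 2 + 28 * lam * β + 2 * lam
          + 16 * β ^ 3 + 20 * β ^ 2 + 4 * β) *
          (∫ t in (-1:ℝ)..1, t * (R.eval t) ^ 3 * (1 - t ^ 2) ^ β) := by
        rw [hstep]; exact mul_pos h12 hI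
      have hΘ : 0 < 9 * lam ^ 2 + 8 * lam * β ^ 2 + 28 * lam * β + 2 * lam
          + 16 * β ^ 3 + 20 * β ^ 2 + 4 * β := by
        nlinarith [mul_nonneg hlampos.le (mul_nonneg hβ hβ), mul_nonneg hlampos.le hβ,
          mul_nonneg (mul_nonneg hβ hβ) hβ, mul_nonneg hβ hβ, hlampos]
      rcases mul_pos_iff.mp hprod with ⟨_, hX⟩ | ⟨hneg, _⟩
      · exact hX
      · linarith



/-- For even positive `k`, the weighted integral of the cube of the Gegenbauer-type
polynomial `P_{k,n}` (degree `k`, solving the Gegenbauer ODE, normalized by `P(1)=1`)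
is strictly positive. -/
theorem cube_integral_pos_of_even (n k : ℕ) (hn : 2 ≤ n) (hk : 1 ≤ k) (hke : Even k)
    (P : Polynomial ℝ) (hdeg : P.natDegree = k) (hnorm : P.eval 1 = 1)
    (hode : ∀ t : ℝ,
      (1 - t ^ 2) * (P.derivative.derivative.eval t) - (n : ℝ) * t * (P.derivative.eval t)
        + (k : ℝ) * ((k : ℝ) + (n : ℝ) - 1) * P.eval t = 0) :
    0 < ∫ t in (-1 : ℝ)..1, (P.eval t) ^ 3 * (1 - t ^ 2) ^ (((n : ℝ) - 2) / 2) := by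
  exact (main_pos k n P hn hode (by rw [hnorm]; norm_num)).1 hke
end

section
/- On the Riemannian product (S^n × S^n, G_δ), the function f(p,q) = ⟨p,q⟩ satisfies |∇_{G_δ} f|²_{G_δ} = (1 + 1/δ)(1 - f²); in particular f is an isoparametric function whose only critical values are ±1. -/
open Real Set

/-- The squared norm (with respect to the round metric `g₀` of curvature 1) of the
spherical gradient of `u` at a point `p` of the unit sphere `S^n ⊂ ℝ^{n+1}`, computed as
the squared Euclidean norm of the gradient of the degree-zero homogeneous extension
`x ↦ u(x/‖x‖)`. -/
noncomputable def sphereGradNormSq (n : ℕ) (u : EuclideanSpace ℝ (Fin (n + 1)) → ℝ)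
    (p : EuclideanSpace ℝ (Fin (n + 1))) : ℝ :=
  ‖gradient (fun x => u (‖x‖⁻¹ • x)) p‖ ^ 2

lemma sphereGradNormSq_inner (n : ℕ) (p q : EuclideanSpace ℝ (Fin (n + 1)))
    (hp : ‖p‖ = 1) (hq : ‖q‖ = 1) :
    sphereGradNormSq n (fun x => (inner ℝ x q : ℝ)) p = 1 - (inner ℝ p q : ℝ) ^ 2 := by
  have hnsq : HasFDerivAt (fun x : EuclideanSpace ℝ (Fin (n + 1)) => ‖x‖ ^ 2)
      ((2 : ℕ) • (innerSL ℝ p)) p :=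
    (hasStrictFDerivAt_norm_sq p).hasFDerivAt
  have hsq_ne : (‖p‖ : ℝ) ^ 2 ≠ 0 := by rw [hp]; norm_num
  have hsqrt : HasFDerivAt (fun x : EuclideanSpace ℝ (Fin (n + 1)) => Real.sqrt (‖x‖ ^ 2))
      ((1 / (2 * Real.sqrt (‖p‖ ^ 2))) • ((2 : ℕ) • (innerSL ℝ p))) p :=
    hnsq.sqrt hsq_ne
  have hnorm : HasFDerivAt (fun x : EuclideanSpace ℝ (Fin (n + 1)) => ‖x‖) (innerSL ℝ p) p := by
    have h1 : (fun x : EuclideanSpace ℝ (Fin (n + 1)) => Real.sqrt (‖x‖ ^ 2))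
        = fun x : EuclideanSpace ℝ (Fin (n + 1)) => ‖x‖ := by
      funext x; rw [Real.sqrt_sq (norm_nonneg x)]
    have h2 : ((1 / (2 * Real.sqrt (‖p‖ ^ 2))) • ((2 : ℕ) • (innerSL ℝ p)))
        = innerSL ℝ p := by
      rw [hp]
      ext y
      simp [smul_smul]
    rw [← h1, ← h2]
    exact hsqrt
  have hp_ne : ‖p‖ ≠ 0 := by rw [hp]; norm_num
  have hinv : HasFDerivAt (fun x : EuclideanSpace ℝ (Fin (n + 1)) => ‖x‖⁻¹)
      ((-(‖p‖ ^ 2)⁻¹) • (innerSL ℝ p)) p :=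
    (hasDerivAt_inv hp_ne).comp_hasFDerivAt p hnorm
  have hlin : HasFDerivAt (fun x : EuclideanSpace ℝ (Fin (n + 1)) => (inner ℝ x q : ℝ))
      (innerSL ℝ q) p := by
    have h1 : (fun x : EuclideanSpace ℝ (Fin (n + 1)) => (inner ℝ x q : ℝ))
        = fun x => (innerSL ℝ q) x := by
      funext x; simp [real_inner_comm]
    rw [h1]
    exact (innerSL ℝ q).hasFDerivAt
  have hmul : HasFDerivAt (fun x : EuclideanSpace ℝ (Fin (n + 1)) => ‖x‖⁻¹ * (inner ℝ x q : ℝ))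
      (‖p‖⁻¹ • (innerSL ℝ q) + (inner ℝ p q : ℝ) • ((-(‖p‖ ^ 2)⁻¹) • (innerSL ℝ p))) p :=
    hinv.mul hlin
  have hgrad : HasGradientAt
      (fun x : EuclideanSpace ℝ (Fin (n + 1)) => (inner ℝ (‖x‖⁻¹ • x) q : ℝ))
      (q - (inner ℝ p q : ℝ) • p) p := by
    rw [hasGradientAt_iff_hasFDerivAt]
    have h1 : (fun x : EuclideanSpace ℝ (Fin (n + 1)) => (inner ℝ (‖x‖⁻¹ • x) q : ℝ))
        = fun x => ‖x‖⁻¹ * (inner ℝ x q : ℝ) := by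
      funext x; rw [real_inner_smul_left]
    have h2 : (InnerProductSpace.toDual ℝ (EuclideanSpace ℝ (Fin (n + 1))))
          (q - (inner ℝ p q : ℝ) • p)
        = ‖p‖⁻¹ • (innerSL ℝ q) + (inner ℝ p q : ℝ) • ((-(‖p‖ ^ 2)⁻¹) • (innerSL ℝ p)) := by
      ext y
      simp [InnerProductSpace.toDual_apply_apply, inner_sub_left, real_inner_smul_left, hp]
      ring
    rw [h1, h2]
    exact hmul
  have hg : gradient
      (fun x : EuclideanSpace ℝ (Fin (n + 1)) => (inner ℝ (‖x‖⁻¹ • x) q : ℝ)) p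
      = q - (inner ℝ p q : ℝ) • p := hgrad.gradient
  unfold sphereGradNormSq
  rw [hg, @norm_sub_sq_real]
  rw [real_inner_smul_right, norm_smul, hq, real_inner_comm q p]
  simp [hp, abs_mul_abs_self]
  ring

/-- On `(S^n × S^n, G_δ)` with `G_δ = g₀ + δ g₀`, the function `f(p,q) = ⟨p,q⟩`
satisfies `|∇_{G_δ} f|²_{G_δ} = (1 + 1/δ)(1 - f²)`; in particular the only critical
values of `f` are `±1`. -/
theorem gradient_norm_inner_product (n : ℕ) (δ : ℝ) (hδ : 0 < δ) :
    (∀ p q : EuclideanSpace ℝ (Fin (n + 1)),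
      p ∈ Metric.sphere (0 : EuclideanSpace ℝ (Fin (n + 1))) 1 →
      q ∈ Metric.sphere (0 : EuclideanSpace ℝ (Fin (n + 1))) 1 →
        sphereGradNormSq n (fun x => (inner ℝ x q : ℝ)) p
          + δ⁻¹ * sphereGradNormSq n (fun y => (inner ℝ p y : ℝ)) q
          = (1 + 1 / δ) * (1 - (inner ℝ p q : ℝ) ^ 2)) ∧
    (∀ p q : EuclideanSpace ℝ (Fin (n + 1)),
      p ∈ Metric.sphere (0 : EuclideanSpace ℝ (Fin (n + 1))) 1 →
      q ∈ Metric.sphere (0 : EuclideanSpace ℝ (Fin (n + 1))) 1 →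
        sphereGradNormSq n (fun x => (inner ℝ x q : ℝ)) p
          + δ⁻¹ * sphereGradNormSq n (fun y => (inner ℝ p y : ℝ)) q = 0 →
        (inner ℝ p q : ℝ) = 1 ∨ (inner ℝ p q : ℝ) = -1) := by
  have key : ∀ p q : EuclideanSpace ℝ (Fin (n + 1)),
      p ∈ Metric.sphere (0 : EuclideanSpace ℝ (Fin (n + 1))) 1 →
      q ∈ Metric.sphere (0 : EuclideanSpace ℝ (Fin (n + 1))) 1 →
        sphereGradNormSq n (fun x => (inner ℝ x q : ℝ)) p
          + δ⁻¹ * sphereGradNormSq n (fun y => (inner ℝ p y : ℝ)) q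
          = (1 + 1 / δ) * (1 - (inner ℝ p q : ℝ) ^ 2) := by
    intro p q hp hq
    rw [mem_sphere_zero_iff_norm] at hp hq
    have h1 := sphereGradNormSq_inner n p q hp hq
    have h2 := sphereGradNormSq_inner n q p hq hp
    have h3 : (fun y => (inner ℝ p y : ℝ)) = fun y => (inner ℝ y p : ℝ) := by
      funext y; rw [real_inner_comm]
    rw [h1, h3, h2, real_inner_comm q p]
    ring
  refine ⟨key, fun p q hp hq h0 => ?_⟩
  have h := key p q hp hq
  rw [h0] at h
  have hδ' : 0 < 1 + 1 / δ := by positivity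
  have hsq : (inner ℝ p q : ℝ) ^ 2 = 1 := by
    have := mul_eq_zero.mp h.symm
    rcases this with h' | h'
    · exact absurd h' (ne_of_gt hδ')
    · linarith
  have hfac : ((inner ℝ p q : ℝ) - 1) * ((inner ℝ p q : ℝ) + 1) = 0 := by nlinarith
  rcases mul_eq_zero.mp hfac with h' | h'
  · left; linarith
  · right; linarith
end
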